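/- The sequence of Motzkin numbers (M_n)_{n≥0} is log-convex: for all n ≥ 1, M_n^2 ≤ M_{n-1} · M_{n+1}. -/

import Mathlib

/-- The Motzkin numbers: `M (n+2) = M (n+1) + ∑_{k=0}^{n} M k * M (n-k)`. -/
def motzkin : ℕ → ℕ
  | 0 => 1
  | 1 => 1
  | n + 2 => motzkin (n + 1) + ∑ i : Fin (n + 1), motzkin i * motzkin (n - i)

lemma motzkin_add_two (n : ℕ) : motzkin (n+2) = motzkin (n+1) + ∑ i ∈ Finset.range (n+1), motzkin i * motzkin (n - i) := by
  rw [motzkin]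
  congr 1
  exact Fin.sum_univ_eq_sum_range (fun i => motzkin i * motzkin (n - i)) (n+1)

open PowerSeries in
noncomputable def mzS : PowerSeries ℤ := PowerSeries.mk fun n => (motzkin n : ℤ)

open PowerSeries Finset in
lemma coeff_mzS_sq (n : ℕ) : (coeff (R := ℤ) n) (mzS * mzS) = ((∑ i ∈ range (n+1), motzkin i * motzkin (n - i) : ℕ) : ℤ) := by
  rw [coeff_mul, Finset.Nat.sum_antidiagonal_eq_sum_range_succ_mk]
  push_cast
  refine Finset.sum_congr rfl fun i hi => ?_
  simp [mzS]

open PowerSeries Finset in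
lemma mzS_eq : (X:PowerSeries ℤ)^2 * (mzS * mzS) + X * mzS + 1 = mzS := by
  ext n
  match n with
  | 0 =>
    simp [coeff_X_pow_mul', coeff_one, mzS, motzkin]
  | 1 =>
    simp [coeff_X_pow_mul', coeff_succ_X_mul, coeff_one, mzS, motzkin]
  | (n+2) =>
    rw [map_add, map_add, coeff_X_pow_mul _ 2 n, coeff_succ_X_mul, coeff_mzS_sq,
      coeff_one, if_neg (by omega)]
    simp only [mzS, coeff_mk]
    rw [motzkin_add_two]
    push_cast
    ring

open PowerSeries in
noncomputable def mzD : PowerSeries ℤ := d⁄dX ℤ mzS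

open PowerSeries in
lemma mzS_deriv : 2*X*(mzS*mzS) + 2*X^2*(mzS*mzD) + mzS + X*mzD = mzD := by
  have h := congrArg (d⁄dX ℤ) mzS_eq
  simp only [map_add, Derivation.leibniz, Derivation.leibniz_pow, derivative_X,
    Derivation.map_one_eq_zero, smul_eq_mul, mzD] at h ⊢
  linear_combination h

open PowerSeries in
lemma mzS_ode : (X:PowerSeries ℤ)*mzD = 2*((X:PowerSeries ℤ)^2*mzD) + 3*(X^3*mzD)
    + 3*((X:PowerSeries ℤ)^2*mzS) + 3*(X*mzS) - 2*mzS + 2 := by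
  linear_combination (X*(2*X^2*mzS + X - 1)) * mzS_deriv + (-4*X^3*mzD - 4*X^2*mzS - 2) * mzS_eq

open PowerSeries in
lemma mzS_ode' : (X:PowerSeries ℤ)*mzD = X^2*((2:ℤ) • mzD) + X^3*((3:ℤ) • mzD)
    + (X:PowerSeries ℤ)^2*((3:ℤ) • mzS) + X*((3:ℤ) • mzS) - (2:ℤ) • mzS + PowerSeries.C (R := ℤ) 2 := by
  simp only [zsmul_eq_mul]
  have h2 : (PowerSeries.C (R := ℤ)) 2 = 2 := by norm_num
  rw [h2]
  push_cast
  linear_combination mzS_ode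

lemma motzkin_rec (n : ℕ) : ((n:ℤ)+5) * motzkin (n+3) =
    (2*(n:ℤ)+7) * motzkin (n+2) + 3*((n:ℤ)+2) * motzkin (n+1) := by
  have h := congrArg (PowerSeries.coeff (R := ℤ) (n+3)) mzS_ode'
  rw [show n+3 = (n+1)+2 from rfl] at h
  rw [PowerSeries.coeff_succ_X_mul] at h
  simp only [map_add, map_sub] at h
  rw [show (n+1)+2 = ((n+1))+2 from rfl] at h
  rw [PowerSeries.coeff_X_pow_mul _ 2 (n+1)] at h
  rw [show (n+1)+2 = n+3 from rfl, PowerSeries.coeff_X_pow_mul _ 3 n] at h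
  rw [show n+3 = (n+1)+2 from rfl, PowerSeries.coeff_X_pow_mul _ 2 (n+1)] at h
  rw [show (n+1)+2 = ((n+1)+1)+1 from rfl, PowerSeries.coeff_succ_X_mul] at h
  simp only [PowerSeries.coeff_smul, map_zsmul, PowerSeries.coeff_C, smul_eq_mul, mzD,
    PowerSeries.coeff_derivative, mzS, PowerSeries.coeff_mk] at h
  norm_num at h
  linarith


lemma motzkin_pos (n : ℕ) : 0 < motzkin n := by
  induction n using Nat.strong_induction_on with
  | _ n ih =>
    match n with
    | 0 => simp [motzkin]
    | 1 => simp [motzkin]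
    | n+2 =>
      rw [motzkin_add_two]
      have := ih (n+1) (by omega)
      omega

lemma motzkin_bounds (j : ℕ) (hj : 1 ≤ j) :
    (24*(j:ℤ)+45) * motzkin (j+1) ≤ (8*(j:ℤ)+27) * motzkin (j+2) ∧
    (8*(j:ℤ)+35) * motzkin (j+2) ≤ (24*(j:ℤ)+69) * motzkin (j+1) := by
  induction j, hj using Nat.le_induction with
  | base =>
    have h2 : motzkin 2 = 2 := by simp [motzkin]
    have h3 : motzkin 3 = 4 := by simp [motzkin, Fin.sum_univ_succ, h2]
    rw [h2, h3]; norm_num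
  | succ j hj ih =>
    obtain ⟨hlo, hhi⟩ := ih
    have hrec := motzkin_rec j
    have p1 : (0:ℤ) < motzkin (j+1) := by exact_mod_cast motzkin_pos (j+1)
    have p2 : (0:ℤ) < motzkin (j+2) := by exact_mod_cast motzkin_pos (j+2)
    have p3 : (0:ℤ) < motzkin (j+3) := by exact_mod_cast motzkin_pos (j+3)
    have hj' : (1:ℤ) ≤ (j:ℤ) := by exact_mod_cast hj
    push_cast at hlo hhi hrec ⊢
    constructor
    · nlinarith [mul_pos p1 p2, mul_pos p2 p3, mul_pos p1 p3]
    · nlinarith [mul_pos p1 p2, mul_pos p2 p3, mul_pos p1 p3]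

theorem motzkin_log_convex (n : ℕ) (hn : 1 ≤ n) :
    motzkin n ^ 2 ≤ motzkin (n - 1) * motzkin (n + 1) := by
  have h2 : motzkin 2 = 2 := by simp [motzkin]
  have h3 : motzkin 3 = 4 := by simp [motzkin, Fin.sum_univ_succ, h2]
  match n with
  | 1 => simp [motzkin, h2]
  | 2 => simp [motzkin, h2, h3]
  | (n+3) =>
    have hhi := (motzkin_bounds (n+1) (by omega)).2
    have hlo := (motzkin_bounds (n+2) (by omega)).1
    rw [show n+1+2 = n+3 from rfl, show n+1+1 = n+2 from rfl] at hhi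
    rw [show n+2+1 = n+3 from rfl, show n+2+2 = n+4 from rfl] at hlo
    rw [show n+3-1 = n+2 from rfl, show n+3+1 = n+4 from rfl]
    zify
    have key := mul_le_mul hhi hlo (by positivity) (by positivity)
    have hn1 : (0:ℤ) < (8*((n:ℤ)+1)+35) * (24*((n:ℤ)+2)+45) := by positivity
    push_cast at key hn1 ⊢
    nlinarith [key, hn1]
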